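/- Let k ≥ 2 be fixed and n sufficiently large, and let q ≥ 2^{3k/2} e^{k/2+1} k · binom(n,k)/n. Then Σ_{t=k}^{n} binom(n,t) · binom(2^k·binom(t,k), 2t/k) · q^{-2t/k} < 1 (with 2t/k interpreted as ⌈2t/k⌉). -/

import Mathlib

open Real Finset


lemma aux_pow_div_fact_le_exp (x : ℝ) (hx : 0 ≤ x) (s : ℕ) :
    x ^ s / s.factorial ≤ Real.exp x := by
  calc x ^ s / s.factorial ≤ ∑ i ∈ range (s+1), x ^ i / i.factorial := by
        refine Finset.single_le_sum (f := fun i => x ^ i / (i.factorial : ℝ)) ?_ (Finset.self_mem_range_succ s)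
        intro i _; positivity
    _ ≤ Real.exp x := Real.sum_le_exp_of_nonneg hx _

lemma aux_choose_le (N s : ℕ) (hs : 0 < s) :
    (N.choose s : ℝ) ≤ (Real.exp 1 * N / s) ^ s := by
  have h1 : (N.choose s : ℝ) ≤ (N ^ s : ℝ) / s.factorial := Nat.choose_le_pow_div s N
  have hs' : (0:ℝ) < s := by exact_mod_cast hs
  have h2 : ((s:ℝ)) ^ s / s.factorial ≤ Real.exp s := aux_pow_div_fact_le_exp s (by positivity) s
  have hfac : (0:ℝ) < s.factorial := by exact_mod_cast s.factorial_pos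
  have key : (N ^ s : ℝ) / s.factorial ≤ (Real.exp 1 * N / s) ^ s := by
    have heq : (Real.exp 1 * N / s) ^ s = Real.exp s * ((N:ℝ)^s / (s:ℝ)^s) := by
      rw [div_pow, mul_pow, ← Real.exp_one_pow]; ring
    rw [heq]
    rw [div_le_iff₀ hfac] at h2 ⊢
    calc (N:ℝ)^s = ((s:ℝ)^s / s.factorial * s.factorial) * ((N:ℝ)^s/(s:ℝ)^s) := by
          field_simp
      _ ≤ (Real.exp s * s.factorial) * ((N:ℝ)^s/(s:ℝ)^s) := by
          apply mul_le_mul_of_nonneg_right _ (by positivity)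
          rw [div_mul_cancel₀ _ (ne_of_gt hfac)]; exact h2
      _ = Real.exp s * ((N:ℝ)^s/(s:ℝ)^s) * s.factorial := by ring
  exact h1.trans key

lemma aux_choose_lb (k n : ℕ) (hk : 1 ≤ k) (hn : 2 * k ^ 2 ≤ n) :
    (n : ℝ) ^ k ≤ 2 * k.factorial * n.choose k := by
  have hkn : k ≤ n := le_trans (by nlinarith) hn
  have hnpos : 0 < n := lt_of_lt_of_le (by positivity) hkn
  have hn0 : (0:ℝ) < n := by exact_mod_cast hnpos
  have hk0 : (0:ℝ) < k := by exact_mod_cast hk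
  have hnR : 2 * (k:ℝ)^2 ≤ n := by exact_mod_cast hn
  have hb : 1 - (k:ℝ)^2 / n ≤ (1 - (k:ℝ)/n) ^ k := by
    have hdiv : (k:ℝ)/n ≤ 1 := div_le_one_of_le₀ (by exact_mod_cast hkn) hn0.le
    have := one_add_mul_le_pow (a := -(k:ℝ)/n) (by rw [neg_div]; linarith) k
    calc 1 - (k:ℝ)^2/n = 1 + k * (-(k:ℝ)/n) := by ring
      _ ≤ (1 + -(k:ℝ)/n) ^ k := this
      _ = (1 - (k:ℝ)/n) ^ k := by ring_nf
  have hhalf : (1:ℝ)/2 ≤ 1 - (k:ℝ)^2 / n := by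
    have : (k:ℝ)^2 / n ≤ 1/2 := by
      rw [div_le_div_iff₀ hn0 (by norm_num)]; linarith
    linarith
  have hsub : ((n:ℝ) - k) ^ k = (n:ℝ)^k * (1 - (k:ℝ)/n)^k := by
    rw [← mul_pow]; congr 1; field_simp
  have h1 : (n:ℝ)^k / 2 ≤ ((n:ℝ) - k)^k := by
    rw [hsub]
    calc (n:ℝ)^k / 2 = (n:ℝ)^k * (1/2) := by ring
      _ ≤ (n:ℝ)^k * (1 - (k:ℝ)/n)^k := by
          apply mul_le_mul_of_nonneg_left (hhalf.trans hb) (by positivity)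
  have h2 : ((n:ℝ) - k)^k ≤ ((n + 1 - k : ℕ) : ℝ)^k := by
    apply pow_le_pow_left₀
    · have : (k:ℝ) ≤ n := by exact_mod_cast hkn
      linarith
    · have : ((n + 1 - k : ℕ) : ℝ) = (n:ℝ) + 1 - k := by
        have : k ≤ n + 1 := hkn.trans (Nat.le_succ n)
        push_cast [Nat.cast_sub this]; ring
      rw [this]; linarith
  have h3 : ((n + 1 - k : ℕ) : ℝ)^k ≤ k.factorial * n.choose k := by
    have := Nat.pow_le_choose (α := ℝ) k n
    rw [div_le_iff₀ (by exact_mod_cast k.factorial_pos : (0:ℝ) < k.factorial)] at this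
    calc ((n + 1 - k : ℕ) : ℝ)^k ≤ (n.choose k : ℝ) * k.factorial := by exact_mod_cast this
      _ = k.factorial * n.choose k := by ring
  nlinarith [h1, h2, h3]

set_option maxHeartbeats 1000000 in
lemma aux_term (k n t q : ℕ) (hk : 2 ≤ k) (hn : 2*k^2 ≤ n) (hkt : k ≤ t) (htn : t ≤ n)
    (hq0 : 0 < q)
    (hQ : (2:ℝ)^(3*(k:ℝ)/2) * Real.exp ((k:ℝ)/2+1) * k * (n.choose k : ℝ)/n ≤ q) :
    (n.choose t : ℝ) * (((2^k * t.choose k).choose ((2*t+k-1)/k)) : ℝ) *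
      (q:ℝ)^(-((((2*t+k-1)/k : ℕ)) : ℝ)) ≤ (1/2:ℝ)^t := by
  have hk1 : 1 ≤ k := hk.trans' one_le_two
  have hkpos : 0 < k := hk1
  have ht0 : 0 < t := lt_of_lt_of_le hkpos hkt
  have hnpos : 0 < n := lt_of_lt_of_le ht0 htn
  have hk0 : (0:ℝ) < k := by exact_mod_cast hkpos
  have hkR2 : (2:ℝ) ≤ k := by exact_mod_cast hk
  have ht0R : (0:ℝ) < t := by exact_mod_cast ht0
  have hn0R : (0:ℝ) < n := by exact_mod_cast hnpos
  have hq0R : (0:ℝ) < q := by exact_mod_cast hq0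
  have htnR : (t:ℝ) ≤ n := by exact_mod_cast htn
  have hktR : (k:ℝ) ≤ t := by exact_mod_cast hkt
  set E := Real.exp 1 with hE
  have hE0 : 0 < E := Real.exp_pos 1
  set s := (2*t + k - 1)/k with hs
  set N := 2^k * t.choose k with hN
  -- s facts
  have hks : 2*t ≤ k * s := by
    have h := Nat.lt_mul_div_succ (2*t+k-1) hkpos
    rw [mul_add, mul_one, ← hs] at h
    set A := k * s with hA
    omega
  have hspos : 0 < s := by
    rcases Nat.eq_zero_or_pos s with h | h
    · rw [h, mul_zero] at hks; omega
    · exact h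
  have hsR : 2*(t:ℝ) ≤ (k:ℝ) * s := by exact_mod_cast hks
  have hs0R : (0:ℝ) < s := by exact_mod_cast hspos
  have htk_le_s : 2*(t:ℝ)/k ≤ (s:ℝ) := by
    rw [div_le_iff₀ hk0]; nlinarith
  have hNpos : 0 < N := by
    have := Nat.choose_pos hkt
    positivity
  have hN0R : (0:ℝ) < N := by exact_mod_cast hNpos
  -- bound on choose factors
  have h1 : (n.choose t : ℝ) ≤ (E*n/t)^t := aux_choose_le n t ht0
  have h2 : (N.choose s : ℝ) ≤ (E*N/s)^s := aux_choose_le N s hspos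
  have h3 : (q:ℝ)^(-((s:ℕ) : ℝ)) = ((q:ℝ)⁻¹)^s := by
    rw [Real.rpow_neg hq0R.le, Real.rpow_natCast, inv_pow]
  -- lower bound on q
  have hql : (2:ℝ)^(3*(k:ℝ)/2) * Real.exp ((k:ℝ)/2+1) * k * ((n:ℝ)^(k-1) / (2 * k.factorial)) ≤ q := by
    refine le_trans ?_ hQ
    have hc := aux_choose_lb k n hk1 hn
    have hpow : (n:ℝ)^(k-1) * n = (n:ℝ)^k := by
      rw [← pow_succ]; congr 1; omega
    have hfac0 : (0:ℝ) < k.factorial := by exact_mod_cast k.factorial_pos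
    have hP : (0:ℝ) < (2:ℝ)^(3*(k:ℝ)/2) * Real.exp ((k:ℝ)/2+1) * k := by positivity
    have hkey : (n:ℝ)^(k-1)/(2*(k.factorial:ℝ)) ≤ (n.choose k : ℝ)/n := by
      rw [div_le_div_iff₀ (by positivity) hn0R]
      nlinarith [hc, hpow]
    calc (2:ℝ)^(3*(k:ℝ)/2) * Real.exp ((k:ℝ)/2+1) * k * ((n:ℝ)^(k-1) / (2 * k.factorial))
        ≤ (2:ℝ)^(3*(k:ℝ)/2) * Real.exp ((k:ℝ)/2+1) * k * ((n.choose k : ℝ)/n) :=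
          mul_le_mul_of_nonneg_left hkey hP.le
      _ = (2:ℝ)^(3*(k:ℝ)/2) * Real.exp ((k:ℝ)/2+1) * k * (n.choose k : ℝ)/n := by ring
  -- the quantity u
  set u : ℝ := (2:ℝ)^(-(k:ℝ)/2) * Real.exp (-(k:ℝ)/2) * ((t:ℝ)/n)^(k-1) with hu
  have hbase : (0:ℝ) < (t:ℝ)/n := div_pos ht0R hn0R
  have hbase1 : (t:ℝ)/n ≤ 1 := div_le_one_of_le₀ htnR hn0R.le
  have hu0 : 0 < u := by
    apply mul_pos (mul_pos (Real.rpow_pos_of_pos two_pos _) (Real.exp_pos _))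
    exact pow_pos hbase _
  have hu1 : u ≤ 1 := by
    have a1 : (2:ℝ)^(-(k:ℝ)/2) ≤ 1 :=
      Real.rpow_le_one_of_one_le_of_nonpos one_le_two (by linarith)
    have a2 : Real.exp (-(k:ℝ)/2) ≤ 1 := Real.exp_le_one_iff.mpr (by linarith)
    have a3 : ((t:ℝ)/n)^(k-1) ≤ 1 := pow_le_one₀ hbase.le hbase1
    rw [hu]
    exact mul_le_one₀ (mul_le_one₀ a1 (Real.exp_pos _).le a2) (by positivity) a3
  -- step D
  have hD : E*(N:ℝ)/((s:ℝ)*(q:ℝ)) ≤ E*(k:ℝ)*(N:ℝ)/(2*(t:ℝ)*(q:ℝ)) := by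
    rw [div_le_div_iff₀ (mul_pos hs0R hq0R) (by positivity)]
    nlinarith [mul_le_mul_of_nonneg_left hsR (show (0:ℝ) ≤ E*(N:ℝ)*q by positivity)]
  -- step E
  have hfac0 : (0:ℝ) < k.factorial := by exact_mod_cast k.factorial_pos
  have hn1pos : (0:ℝ) < (n:ℝ)^(k-1) := by positivity
  have hNle : (N:ℝ) ≤ (2:ℝ)^k * ((t:ℝ)^k / (k.factorial:ℝ)) := by
    have h := Nat.choose_le_pow_div (α := ℝ) k t
    rw [hN]; push_cast
    exact mul_le_mul_of_nonneg_left h (by positivity)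
  have hQ'pos : (0:ℝ) < (2:ℝ)^(3*(k:ℝ)/2) * Real.exp ((k:ℝ)/2+1) * k * ((n:ℝ)^(k-1) / (2 * k.factorial)) := by
    positivity
  set Q' : ℝ := (2:ℝ)^(3*(k:ℝ)/2) * Real.exp ((k:ℝ)/2+1) * k * ((n:ℝ)^(k-1) / (2 * k.factorial)) with hQdef
  have step1 : E*(k:ℝ)*(N:ℝ)/(2*(t:ℝ)*(q:ℝ)) ≤ E*(k:ℝ)*(N:ℝ)/(2*(t:ℝ)*Q') := by
    apply div_le_div_of_nonneg_left (by positivity) (by positivity)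
    have := mul_le_mul_of_nonneg_left hql (show (0:ℝ) ≤ 2*(t:ℝ) by positivity)
    linarith
  have step2 : E*(k:ℝ)*(N:ℝ)/(2*(t:ℝ)*Q') ≤
      E*(k:ℝ)*((2:ℝ)^k * ((t:ℝ)^k / (k.factorial:ℝ)))/(2*(t:ℝ)*Q') := by
    apply (div_le_div_iff_of_pos_right (by positivity)).mpr
    exact mul_le_mul_of_nonneg_left hNle (by positivity)
  have e1 : (2:ℝ)^(3*(k:ℝ)/2) = (2:ℝ)^(k:ℕ) * (2:ℝ)^((k:ℝ)/2) := by
    rw [← Real.rpow_natCast 2 k, ← Real.rpow_add two_pos]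
    congr 1; ring
  have e2 : Real.exp ((k:ℝ)/2+1) = Real.exp ((k:ℝ)/2) * E := by
    rw [hE, ← Real.exp_add]
  have e3 : (2:ℝ)^(-(k:ℝ)/2) = ((2:ℝ)^((k:ℝ)/2))⁻¹ := by
    rw [neg_div, Real.rpow_neg two_pos.le]
  have e4 : Real.exp (-(k:ℝ)/2) = (Real.exp ((k:ℝ)/2))⁻¹ := by
    rw [neg_div, Real.exp_neg]
  have e5 : (t:ℝ)^k = (t:ℝ)^(k-1) * t := by
    rw [← pow_succ]; congr 1; omega
  have step3 : E*(k:ℝ)*((2:ℝ)^k * ((t:ℝ)^k / (k.factorial:ℝ)))/(2*(t:ℝ)*Q') = u := by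
    rw [hu, hQdef, e1, e2, e3, e4, e5, div_pow]
    have ha : (0:ℝ) < (2:ℝ)^((k:ℝ)/2) := Real.rpow_pos_of_pos two_pos _
    have hb : 0 < Real.exp ((k:ℝ)/2) := Real.exp_pos _
    have hcpos : (0:ℝ) < (2:ℝ)^(k:ℕ) := by positivity
    field_simp
  have hDE : E*(N:ℝ)/((s:ℝ)*(q:ℝ)) ≤ u := hD.trans (step1.trans (step2.trans_eq step3))
  -- exponent θ
  set θ : ℝ := ((k-1:ℕ):ℝ)*(2*(t:ℝ)/k) with hθdef
  have hcast : ((k-1:ℕ):ℝ) = (k:ℝ) - 1 := by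
    push_cast [Nat.cast_sub hk1]; ring
  have hθt : (t:ℝ) ≤ θ := by
    rw [hθdef, hcast]
    have h : (t:ℝ)*k ≤ ((k:ℝ)-1)*(2*t) := by nlinarith
    calc (t:ℝ) = (t:ℝ)*k/k := by field_simp
      _ ≤ ((k:ℝ)-1)*(2*t)/k := by gcongr
      _ = ((k:ℝ)-1)*(2*(t:ℝ)/k) := by ring
  -- main4 : u^{2t/k}
  have main3 : u^s ≤ u^(2*(t:ℝ)/k) := by
    rw [← Real.rpow_natCast u s]
    exact Real.rpow_le_rpow_of_exponent_ge hu0 hu1 htk_le_s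
  have main4 : u ^ (2*(t:ℝ)/k) = (1/2:ℝ)^t * Real.exp (-(t:ℝ)) * ((t:ℝ)/n)^θ := by
    rw [hu, hθdef]
    rw [Real.mul_rpow (by positivity) (by positivity),
        Real.mul_rpow (by positivity) (by positivity)]
    have hek : ((-(k:ℝ))/2)*(2*(t:ℝ)/k) = -(t:ℝ) := by
      field_simp
    congr 1
    · congr 1
      · rw [← Real.rpow_mul (by norm_num : (0:ℝ) ≤ 2), neg_div, ← neg_div, hek,
            Real.rpow_neg two_pos.le, Real.rpow_natCast, ← inv_pow]
        norm_num
      · rw [← Real.exp_mul, neg_div, ← neg_div, hek]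
    · rw [← Real.rpow_natCast ((t:ℝ)/n) (k-1), ← Real.rpow_mul hbase.le]
  -- one bound
  have hEn : (E*(n:ℝ)/t)^t * Real.exp (-(t:ℝ)) = ((n:ℝ)/t)^t := by
    rw [show (-(t:ℝ)) = (t:ℕ) * (-1:ℝ) by push_cast; ring, Real.exp_nat_mul, ← mul_pow]
    congr 1
    rw [Real.exp_neg, hE]
    field_simp
  have hno : ((n:ℝ)/t)^t = ((t:ℝ)/n)^(-(t:ℝ)) := by
    rw [Real.rpow_neg hbase.le, Real.rpow_natCast, ← inv_pow, inv_div]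
  have h_one : (E*(n:ℝ)/t)^t * Real.exp (-(t:ℝ)) * ((t:ℝ)/n)^θ ≤ 1 := by
    calc (E*(n:ℝ)/t)^t * Real.exp (-(t:ℝ)) * ((t:ℝ)/n)^θ
        = ((t:ℝ)/n)^(-(t:ℝ)) * ((t:ℝ)/n)^θ := by rw [hEn, hno]
      _ = ((t:ℝ)/n)^(θ - t) := by
          rw [← Real.rpow_add hbase]; congr 1; ring
      _ ≤ 1 := Real.rpow_le_one hbase.le hbase1 (by linarith)
  -- final assembly
  calc (n.choose t : ℝ) * (N.choose s : ℝ) * (q:ℝ)^(-((s:ℕ) : ℝ))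
      = (n.choose t : ℝ) * (N.choose s : ℝ) * ((q:ℝ)⁻¹)^s := by rw [h3]
    _ ≤ (E*(n:ℝ)/t)^t * (E*(N:ℝ)/s)^s * ((q:ℝ)⁻¹)^s := by
        gcongr <;> first | exact h1 | exact h2 | positivity
    _ = (E*(n:ℝ)/t)^t * (E*(N:ℝ)/((s:ℝ)*(q:ℝ)))^s := by
        rw [mul_assoc, ← mul_pow, ← div_eq_mul_inv, div_div]
    _ ≤ (E*(n:ℝ)/t)^t * u^s := by
        gcongr <;> first | exact hDE | positivity
    _ ≤ (E*(n:ℝ)/t)^t * u^(2*(t:ℝ)/k) := by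
        apply mul_le_mul_of_nonneg_left main3 (by positivity)
    _ = (1/2:ℝ)^t * ((E*(n:ℝ)/t)^t * Real.exp (-(t:ℝ)) * ((t:ℝ)/n)^θ) := by
        rw [main4]; ring
    _ ≤ (1/2:ℝ)^t * 1 := by
        apply mul_le_mul_of_nonneg_left h_one (by positivity)
    _ = (1/2:ℝ)^t := mul_one _

/-- Potential estimate for Client's strategy in the Waiter–Client `k`-SAT game:
for fixed `k ≥ 2`, `n` sufficiently large and `q ≥ 2^{3k/2} e^{k/2+1} k C(n,k)/n`,
`∑_{t=k}^{n} C(n,t) · C(2^k C(t,k), ⌈2t/k⌉) · q^{-⌈2t/k⌉} < 1`. -/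
theorem waiterClient_kSAT_client_potential (k : ℕ) (hk : 2 ≤ k) :
    ∃ n₀ : ℕ, ∀ n : ℕ, n₀ ≤ n → ∀ q : ℕ, 0 < q →
      (2 : ℝ) ^ (3 * (k : ℝ) / 2) * Real.exp ((k : ℝ) / 2 + 1) * k *
          (n.choose k : ℝ) / n ≤ (q : ℝ) →
      ∑ t ∈ Finset.Icc k n,
        (n.choose t : ℝ) * (((2 ^ k * t.choose k).choose ((2 * t + k - 1) / k)) : ℝ) *
          (q : ℝ) ^ (-(((2 * t + k - 1) / k : ℕ) : ℝ)) < 1 := by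
  refine ⟨2 * k ^ 2, fun n hn q hq0 hQ => ?_⟩
  have key : ∀ t ∈ Finset.Icc k n,
      (n.choose t : ℝ) * (((2 ^ k * t.choose k).choose ((2 * t + k - 1) / k)) : ℝ) *
        (q : ℝ) ^ (-(((2 * t + k - 1) / k : ℕ) : ℝ)) ≤ (1/2 : ℝ)^t := by
    intro t ht
    rw [Finset.mem_Icc] at ht
    exact aux_term k n t q hk hn ht.1 ht.2 hq0 hQ
  calc ∑ t ∈ Finset.Icc k n,
        (n.choose t : ℝ) * (((2 ^ k * t.choose k).choose ((2 * t + k - 1) / k)) : ℝ) *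
          (q : ℝ) ^ (-(((2 * t + k - 1) / k : ℕ) : ℝ))
      ≤ ∑ t ∈ Finset.Icc k n, (1/2 : ℝ)^t := Finset.sum_le_sum key
    _ < 1 := by
        rw [← Finset.Ico_add_one_right_eq_Icc, Finset.sum_Ico_eq_sum_range]
        simp_rw [pow_add]
        rw [← Finset.mul_sum]
        have h2 := sum_geometric_two_le (n + 1 - k)
        have h3 : (1/2:ℝ)^k ≤ 1/4 := by
          calc (1/2:ℝ)^k ≤ (1/2:ℝ)^2 :=
                pow_le_pow_of_le_one (by norm_num) (by norm_num) hk
            _ = 1/4 := by norm_num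
        have hsnn : (0:ℝ) ≤ ∑ i ∈ Finset.range (n + 1 - k), (1/2:ℝ)^i := by positivity
        calc (1/2:ℝ)^k * ∑ i ∈ Finset.range (n + 1 - k), (1/2:ℝ)^i
            ≤ (1/4) * 2 := mul_le_mul h3 h2 hsnn (by norm_num)
          _ < 1 := by norm_num
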